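/- (Farkas' Lemma III) Let A be an m × d real matrix, z ∈ ℝ^m, a₀ ∈ ℝ^d, z₀ ∈ ℝ. Then a₀ᵀx ≤ z₀ holds for all x ∈ ℝ^d with Ax ≤ z (coordinatewise) if and only if either (1) there exists a row vector c ≥ 0 with cA = a₀ᵀ and cz ≤ z₀, or (2) there exists a row vector c ≥ 0 with cA = 0 and cz < 0. -/

import Mathlib

open Matrix BigOperators Finset
open scoped InnerProductSpace

namespace FarkasAux

variable {k : ℕ}

/-- The set of nonnegative combinations of a finite family of vectors. -/
def coneSet {n : ℕ} (v : Fin n → EuclideanSpace ℝ (Fin k)) : Set (EuclideanSpace ℝ (Fin k)) :=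
  {x | ∃ c : Fin n → ℝ, (∀ i, 0 ≤ c i) ∧ x = ∑ i, c i • v i}

lemma coneSet_succAbove_subset {n : ℕ} (v : Fin (n + 1) → EuclideanSpace ℝ (Fin k))
    (j : Fin (n + 1)) : coneSet (v ∘ j.succAbove) ⊆ coneSet v := by
  rintro x ⟨c, hc, rfl⟩
  refine ⟨j.insertNth 0 c, ?_, ?_⟩
  · intro i
    rcases eq_or_ne i j with rfl | h
    · simp
    · obtain ⟨p, rfl⟩ := Fin.exists_succAbove_eq h
      simpa using hc p
  · rw [Fin.sum_univ_succAbove _ j]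
    simp [Fin.insertNth_apply_same, Fin.insertNth_apply_succAbove]

theorem coneSet_isClosed : ∀ n (v : Fin n → EuclideanSpace ℝ (Fin k)), IsClosed (coneSet v) := by
  intro n
  induction n using Nat.strong_induction_on with
  | _ n ih =>
  intro v
  rcases n with _ | n
  · have h0 : coneSet v = {0} := by
      ext x
      constructor
      · rintro ⟨c, hc, rfl⟩; simp
      · rintro rfl; exact ⟨0, fun i => le_refl 0, by simp⟩
    rw [h0]; exact isClosed_singleton
  by_cases hv : LinearIndependent ℝ v
  · -- linearly independent: image of the nonneg orthant under a closed embedding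
    set L : (Fin (n + 1) → ℝ) →ₗ[ℝ] EuclideanSpace ℝ (Fin k) :=
      { toFun := fun c => ∑ i, c i • v i
        map_add' := by intro a b; simp [add_smul, Finset.sum_add_distrib]
        map_smul' := by intro r a; simp [smul_smul, Finset.smul_sum] } with hL
    have hker : LinearMap.ker L = ⊥ := by
      rw [LinearMap.ker_eq_bot']
      intro c hc
      funext i
      exact Fintype.linearIndependent_iff.mp hv c hc i
    have hce := LinearMap.isClosedEmbedding_of_injective hker
    have : coneSet v = L '' {c | ∀ i, 0 ≤ c i} := by
      ext x
      constructor
      · rintro ⟨c, hc, rfl⟩; exact ⟨c, hc, rfl⟩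
      · rintro ⟨c, hc, rfl⟩; exact ⟨c, hc, rfl⟩
    rw [this]
    refine hce.isClosedMap _ ?_
    have hset : {c : Fin (n + 1) → ℝ | ∀ i, 0 ≤ c i} = ⋂ i, {c : Fin (n + 1) → ℝ | 0 ≤ c i} := by
      ext c; simp
    rw [hset]
    exact isClosed_iInter fun i => isClosed_le continuous_const (continuous_apply i)
  · -- dependent: write the cone as a finite union of cones with fewer generators
    obtain ⟨g, hgsum, i₀, hgi₀⟩ := Fintype.not_linearIndependent_iff.mp hv
    have key : ∀ h : Fin (n + 1) → ℝ, (∑ i, h i • v i = 0) → (∃ j, 0 < h j) →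
        ∀ x ∈ coneSet v, ∃ j, h j ≠ 0 ∧ x ∈ coneSet (v ∘ j.succAbove) := by
      intro h hsum hex x hx
      obtain ⟨j₀, hj₀⟩ := hex
      obtain ⟨c, hc, rfl⟩ := hx
      set S : Finset (Fin (n + 1)) := Finset.univ.filter (fun i => 0 < h i) with hS
      have hSne : S.Nonempty := ⟨j₀, by simp [hS, hj₀]⟩
      obtain ⟨j, hjS, hjmin⟩ := Finset.exists_mem_eq_inf' hSne (fun i => c i / h i)
      have hhj : 0 < h j := by simpa [hS] using hjS
      set t := S.inf' hSne (fun i => c i / h i) with ht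
      have ht0 : 0 ≤ t := by
        apply Finset.le_inf'
        intro b hb
        have : 0 < h b := by simpa [hS] using hb
        exact div_nonneg (hc b) this.le
      have hc' : ∀ i, 0 ≤ c i - t * h i := by
        intro i
        by_cases hi : 0 < h i
        · have : t ≤ c i / h i := Finset.inf'_le _ (by simp [hS, hi])
          nlinarith [(le_div_iff₀ hi).mp this]
        · push_neg at hi
          nlinarith [hc i]
      have hcj : c j - t * h j = 0 := by
        rw [hjmin, div_mul_cancel₀ _ hhj.ne', sub_self]
      refine ⟨j, hhj.ne', ?_⟩
      refine ⟨fun p => c (j.succAbove p) - t * h (j.succAbove p), fun p => hc' _, ?_⟩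
      have : ∑ i, c i • v i = ∑ i, (c i - t * h i) • v i := by
        simp only [sub_smul, Finset.sum_sub_distrib]
        rw [show (∑ i, (t * h i) • v i) = t • ∑ i, h i • v i by
          rw [Finset.smul_sum]; simp [smul_smul], hsum, smul_zero, sub_zero]
      rw [this, Fin.sum_univ_succAbove _ j, hcj, zero_smul, zero_add]
      rfl
    have key2 : ∀ x ∈ coneSet v, ∃ j, g j ≠ 0 ∧ x ∈ coneSet (v ∘ j.succAbove) := by
      rcases (Ne.lt_or_gt hgi₀) with hneg | hpos
      · intro x hx
        obtain ⟨j, hj, hj2⟩ := key (-g) (by simpa using hgsum) ⟨i₀, by simpa using hneg⟩ x hx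
        exact ⟨j, by simpa using hj, hj2⟩
      · exact key g hgsum ⟨i₀, hpos⟩
    have hrw : coneSet v = ⋃ j : Fin (n + 1), ⋃ _ : g j ≠ 0, coneSet (v ∘ j.succAbove) := by
      ext x
      simp only [Set.mem_iUnion]
      constructor
      · intro hx
        obtain ⟨j, hj, hj2⟩ := key2 x hx
        exact ⟨j, hj, hj2⟩
      · rintro ⟨j, _, hj⟩
        exact coneSet_succAbove_subset v j hj
    rw [hrw]
    exact isClosed_iUnion_of_finite fun j =>
      isClosed_iUnion_of_finite fun _ => ih n (Nat.lt_succ_self n) _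

/-- The cone as a `ConvexCone`. -/
noncomputable def coneCC {n : ℕ} (v : Fin n → EuclideanSpace ℝ (Fin k)) :
    ConvexCone ℝ (EuclideanSpace ℝ (Fin k)) where
  carrier := coneSet v
  smul_mem' := by
    rintro r hr x ⟨c, hc, rfl⟩
    exact ⟨fun i => r * c i, fun i => mul_nonneg hr.le (hc i),
      by simp [Finset.smul_sum, smul_smul]⟩
  add_mem' := by
    rintro x ⟨c, hc, rfl⟩ y ⟨c', hc', rfl⟩
    exact ⟨c + c', fun i => add_nonneg (hc i) (hc' i),
      by simp [add_smul, Finset.sum_add_distrib]⟩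

lemma mem_coneCC {n : ℕ} (v : Fin n → EuclideanSpace ℝ (Fin k))
    (x : EuclideanSpace ℝ (Fin k)) : x ∈ coneCC v ↔ x ∈ coneSet v := Iff.rfl

lemma mem_coneSet_self {n : ℕ} (v : Fin n → EuclideanSpace ℝ (Fin k)) (i : Fin n) :
    v i ∈ coneSet v := by
  classical
  refine ⟨fun p => if p = i then 1 else 0, fun p => by positivity, ?_⟩
  simp [ite_smul]

lemma zero_mem_coneSet {n : ℕ} (v : Fin n → EuclideanSpace ℝ (Fin k)) :
    (0 : EuclideanSpace ℝ (Fin k)) ∈ coneSet v :=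
  ⟨0, fun i => le_rfl, by simp⟩

lemma euclid_sum_apply {M : ℕ} (w : Fin M → EuclideanSpace ℝ (Fin k)) (c : Fin M → ℝ)
    (j : Fin k) : (∑ i, c i • w i) j = ∑ i, c i * w i j := by
  have h := map_sum (EuclideanSpace.projₗ (𝕜 := ℝ) j) (fun i => c i • w i) Finset.univ
  simp only [PiLp.projₗ_apply, PiLp.smul_apply, smul_eq_mul] at h
  exact h

lemma inner_eq (x y : EuclideanSpace ℝ (Fin k)) : ⟪x, y⟫_ℝ = ∑ i, x i * y i := by
  simp [PiLp.inner_apply, RCLike.inner_apply, conj_trivial]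
  exact Finset.sum_congr rfl fun i _ => mul_comm _ _

def liftV {d : ℕ} (a : Fin d → ℝ) (t : ℝ) : EuclideanSpace ℝ (Fin (d + 1)) := WithLp.toLp 2 (Fin.snoc a t : Fin (d + 1) → ℝ)

lemma inner_liftV {d : ℕ} (a : Fin d → ℝ) (t : ℝ) (y : EuclideanSpace ℝ (Fin (d + 1))) :
    ⟪liftV a t, y⟫_ℝ = (∑ j, a j * y (Fin.castSucc j)) + t * y (Fin.last d) := by
  rw [inner_eq, Fin.sum_univ_castSucc]
  simp [liftV]

def genF {m d : ℕ} (A : Matrix (Fin m) (Fin d) ℝ) (z : Fin m → ℝ) :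
    Fin (m + 1) → EuclideanSpace ℝ (Fin (d + 1)) :=
  Fin.snoc (fun i => liftV (A i) (z i)) (liftV 0 1)

lemma mem_cone_iff {m d : ℕ} (A : Matrix (Fin m) (Fin d) ℝ) (z : Fin m → ℝ)
    (a : Fin d → ℝ) (t : ℝ) :
    liftV a t ∈ coneSet (genF A z) ↔
      ∃ c : Fin m → ℝ, (∀ i, 0 ≤ c i) ∧ Matrix.vecMul c A = a ∧
        ∃ s : ℝ, 0 ≤ s ∧ c ⬝ᵥ z + s = t := by
  constructor
  · rintro ⟨C, hC, hEq⟩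
    refine ⟨fun i => C (Fin.castSucc i), fun i => hC _, ?_, C (Fin.last m), hC _, ?_⟩
    · funext j
      have h : (liftV a t) (Fin.castSucc j) = (∑ i, C i • genF A z i) (Fin.castSucc j) := by rw [hEq]
      rw [euclid_sum_apply] at h
      rw [Fin.sum_univ_castSucc] at h
      simp only [genF, liftV, WithLp.ofLp_toLp, Fin.snoc_castSucc, Fin.snoc_last, Pi.zero_apply, mul_zero,
        mul_one, add_zero, mul_zero] at h
      simpa [Matrix.vecMul, dotProduct] using h.symm
    · have h : (liftV a t) (Fin.last d) = (∑ i, C i • genF A z i) (Fin.last d) := by rw [hEq]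
      rw [euclid_sum_apply] at h
      rw [Fin.sum_univ_castSucc] at h
      simp only [genF, liftV, WithLp.ofLp_toLp, Fin.snoc_castSucc, Fin.snoc_last, mul_one] at h
      simpa [dotProduct] using h.symm
  · rintro ⟨c, hc, rfl, s, hs, rfl⟩
    refine ⟨Fin.snoc c s, ?_, ?_⟩
    · intro i
      rcases eq_or_ne i (Fin.last m) with rfl | h
      · simpa using hs
      · obtain ⟨p, rfl⟩ := Fin.exists_castSucc_eq.mpr h
        simpa using hc p
    · ext j
      rw [euclid_sum_apply, Fin.sum_univ_castSucc]
      simp only [genF, Fin.snoc_castSucc, Fin.snoc_last]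
      rcases eq_or_ne j (Fin.last d) with rfl | h
      · simp [liftV, dotProduct]
      · obtain ⟨p, rfl⟩ := Fin.exists_castSucc_eq.mpr h
        simp [liftV, Matrix.vecMul, dotProduct]


end FarkasAux

/-- Farkas' Lemma III: the inequality a₀ᵀx ≤ z₀ is valid on the solution set of
Ax ≤ z iff it is a nonnegative combination of the rows of the system, or the
system is infeasible as witnessed by a nonnegative combination. -/
theorem farkas_III {m d : ℕ} (A : Matrix (Fin m) (Fin d) ℝ) (z : Fin m → ℝ)
    (a₀ : Fin d → ℝ) (z₀ : ℝ) :
    (∀ x : Fin d → ℝ, A.mulVec x ≤ z → a₀ ⬝ᵥ x ≤ z₀) ↔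
      ((∃ c : Fin m → ℝ, 0 ≤ c ∧ Matrix.vecMul c A = a₀ ∧ c ⬝ᵥ z ≤ z₀) ∨
       (∃ c : Fin m → ℝ, 0 ≤ c ∧ Matrix.vecMul c A = 0 ∧ c ⬝ᵥ z < 0)) := by
  classical
  constructor
  · intro hvalid
    have hclosed := FarkasAux.coneSet_isClosed (m + 1) (FarkasAux.genF A z)
    have hne : ((FarkasAux.coneCC (FarkasAux.genF A z) : ConvexCone ℝ _) :
        Set (EuclideanSpace ℝ (Fin (d + 1)))).Nonempty :=
      ⟨0, FarkasAux.zero_mem_coneSet _⟩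
    -- common consequences of a separating functional
    have hsep : ∀ y : EuclideanSpace ℝ (Fin (d + 1)),
        (∀ x ∈ FarkasAux.coneCC (FarkasAux.genF A z), 0 ≤ ⟪x, y⟫_ℝ) →
        (∀ i : Fin m, 0 ≤ (∑ j, A i j * y (Fin.castSucc j)) + z i * y (Fin.last d)) ∧
          0 ≤ y (Fin.last d) := by
      intro y hy1
      constructor
      · intro i
        have h := hy1 _ (FarkasAux.mem_coneSet_self (FarkasAux.genF A z) (Fin.castSucc i))
        rwa [show FarkasAux.genF A z (Fin.castSucc i) = FarkasAux.liftV (A i) (z i) by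
          simp [FarkasAux.genF], FarkasAux.inner_liftV] at h
      · have h := hy1 _ (FarkasAux.mem_coneSet_self (FarkasAux.genF A z) (Fin.last m))
        rw [show FarkasAux.genF A z (Fin.last m) = FarkasAux.liftV 0 1 by
          simp [FarkasAux.genF], FarkasAux.inner_liftV] at h
        simpa using h
    -- from separation with positive last coordinate we get a feasible point
    have hfeaspt : ∀ y : EuclideanSpace ℝ (Fin (d + 1)),
        (∀ i : Fin m, 0 ≤ (∑ j, A i j * y (Fin.castSucc j)) + z i * y (Fin.last d)) →
        0 < y (Fin.last d) →
        A.mulVec (fun j => -(y (Fin.castSucc j)) / y (Fin.last d)) ≤ z := by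
      intro y hrow hpos i
      have : A.mulVec (fun j => -(y (Fin.castSucc j)) / y (Fin.last d)) i
          = (-(∑ j, A i j * y (Fin.castSucc j))) / y (Fin.last d) := by
        simp only [Matrix.mulVec, dotProduct]
        rw [← Finset.sum_neg_distrib, Finset.sum_div]
        congr 1; funext j; ring
      rw [this, div_le_iff₀ hpos]
      nlinarith [hrow i]
    by_cases hfeas : ∃ x : Fin d → ℝ, A.mulVec x ≤ z
    · left
      obtain ⟨xbar, hxbar⟩ := hfeas
      have hb : FarkasAux.liftV a₀ z₀ ∈ FarkasAux.coneSet (FarkasAux.genF A z) := by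
        by_contra hnb
        obtain ⟨y, hy1, hy2⟩ :=
          ProperCone.hyperplane_separation'
            ({ toSubmodule := (FarkasAux.coneCC (FarkasAux.genF A z)).toPointedCone
                (FarkasAux.zero_mem_coneSet _), isClosed' := hclosed } : ProperCone ℝ _)
            (x₀ := FarkasAux.liftV a₀ z₀) hnb
        obtain ⟨hrow, hylnn⟩ := hsep y hy1
        have hbneg : (∑ j, a₀ j * y (Fin.castSucc j)) + z₀ * y (Fin.last d) < 0 := by
          rw [FarkasAux.inner_liftV] at hy2
          exact hy2
        rcases eq_or_lt_of_le hylnn with hyl0 | hylpos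
        · -- last coordinate zero: unbounded improving direction
          set u : Fin d → ℝ := fun j => -(y (Fin.castSucc j)) with hu
          have hAu : ∀ i, A.mulVec u i ≤ 0 := by
            intro i
            have := hrow i
            rw [← hyl0, mul_zero, add_zero] at this
            simp only [Matrix.mulVec, dotProduct, hu]
            have : ∑ j, A i j * -(y (Fin.castSucc j)) = -(∑ j, A i j * y (Fin.castSucc j)) := by
              rw [← Finset.sum_neg_distrib]; congr 1; funext j; ring
            rw [this]
            linarith [hrow i, hyl0 ▸ (by linarith [hrow i] :
              (0:ℝ) ≤ (∑ j, A i j * y (Fin.castSucc j)) + z i * y (Fin.last d))]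
          have ha₀u : 0 < a₀ ⬝ᵥ u := by
            rw [← hyl0, mul_zero, add_zero] at hbneg
            simp only [dotProduct, hu]
            have : ∑ j, a₀ j * -(y (Fin.castSucc j)) = -(∑ j, a₀ j * y (Fin.castSucc j)) := by
              rw [← Finset.sum_neg_distrib]; congr 1; funext j; ring
            rw [this]; linarith
          set t : ℝ := max 0 ((z₀ - a₀ ⬝ᵥ xbar + 1) / (a₀ ⬝ᵥ u)) with htdef
          have ht0 : 0 ≤ t := le_max_left _ _
          have hfeas2 : A.mulVec (xbar + t • u) ≤ z := by
            intro i
            have : A.mulVec (xbar + t • u) i = A.mulVec xbar i + t * A.mulVec u i := by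
              simp only [Matrix.mulVec, dotProduct, Pi.add_apply, Pi.smul_apply,
                smul_eq_mul, Finset.mul_sum]
              rw [← Finset.sum_add_distrib]
              congr 1; funext j; ring
            rw [this]
            nlinarith [hxbar i, hAu i]
          have hval : a₀ ⬝ᵥ (xbar + t • u) = a₀ ⬝ᵥ xbar + t * (a₀ ⬝ᵥ u) := by
            simp only [dotProduct, Pi.add_apply, Pi.smul_apply, smul_eq_mul,
              Finset.mul_sum]
            rw [← Finset.sum_add_distrib]
            congr 1; funext j; ring
          have := hvalid _ hfeas2
          rw [hval] at this
          have htge : (z₀ - a₀ ⬝ᵥ xbar + 1) / (a₀ ⬝ᵥ u) ≤ t := le_max_right _ _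
          have : z₀ - a₀ ⬝ᵥ xbar + 1 ≤ t * (a₀ ⬝ᵥ u) := by
            rw [← div_le_iff₀ ha₀u] at *
            nlinarith [htge, ha₀u]
          linarith [hvalid _ hfeas2, hval ▸ hvalid _ hfeas2]
        · -- last coordinate positive: direct violating point
          set x : Fin d → ℝ := fun j => -(y (Fin.castSucc j)) / y (Fin.last d) with hx
          have hfx := hfeaspt y hrow hylpos
          have hv := hvalid x hfx
          have hxval : a₀ ⬝ᵥ x = (-(∑ j, a₀ j * y (Fin.castSucc j))) / y (Fin.last d) := by
            simp only [dotProduct, hx]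
            rw [← Finset.sum_neg_distrib, Finset.sum_div]
            congr 1; funext j; ring
          rw [hxval] at hv
          rw [div_le_iff₀ hylpos] at hv
          nlinarith
      obtain ⟨c, hc, hcA, s, hs, hcs⟩ := (FarkasAux.mem_cone_iff A z a₀ z₀).mp hb
      exact ⟨c, fun i => hc i, hcA, by linarith⟩
    · right
      have hb : FarkasAux.liftV (0 : Fin d → ℝ) (-1) ∈
          FarkasAux.coneSet (FarkasAux.genF A z) := by
        by_contra hnb
        obtain ⟨y, hy1, hy2⟩ :=
          ProperCone.hyperplane_separation'
            ({ toSubmodule := (FarkasAux.coneCC (FarkasAux.genF A z)).toPointedCone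
                (FarkasAux.zero_mem_coneSet _), isClosed' := hclosed } : ProperCone ℝ _)
            (x₀ := FarkasAux.liftV (0 : Fin d → ℝ) (-1)) hnb
        obtain ⟨hrow, hylnn⟩ := hsep y hy1
        have hylpos : 0 < y (Fin.last d) := by
          rw [FarkasAux.inner_liftV] at hy2
          simp only [Pi.zero_apply, zero_mul, Finset.sum_const_zero, zero_add] at hy2
          nlinarith
        exact hfeas ⟨_, hfeaspt y hrow hylpos⟩
      obtain ⟨c, hc, hcA, s, hs, hcs⟩ := (FarkasAux.mem_cone_iff A z 0 (-1)).mp hb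
      exact ⟨c, fun i => hc i, hcA, by linarith⟩
  · rintro (⟨c, hc, hcA, hcz⟩ | ⟨c, hc, hcA, hcz⟩) x hx
    · have key : c ⬝ᵥ A.mulVec x ≤ c ⬝ᵥ z := by
        apply Finset.sum_le_sum
        intro i _
        exact mul_le_mul_of_nonneg_left (hx i) (hc i)
      calc a₀ ⬝ᵥ x = Matrix.vecMul c A ⬝ᵥ x := by rw [hcA]
        _ = c ⬝ᵥ A.mulVec x := (Matrix.dotProduct_mulVec c A x).symm
        _ ≤ c ⬝ᵥ z := key
        _ ≤ z₀ := hcz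
    · exfalso
      have key : c ⬝ᵥ A.mulVec x ≤ c ⬝ᵥ z := by
        apply Finset.sum_le_sum
        intro i _
        exact mul_le_mul_of_nonneg_left (hx i) (hc i)
      have h0 : c ⬝ᵥ A.mulVec x = 0 := by
        rw [Matrix.dotProduct_mulVec, hcA, zero_dotProduct]
      linarith
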